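/- Define the sequence P_0 = p ≤ 1/16 and P_i = ∑_{j=⌈d'/2⌉}^{d'} C(d',j) P_{i-1}^j (1-P_{i-1})^{d'-j} for i ≥ 1, where d' ≥ 8. Then for all k ≥ 1, P_k ≤ p^{(d'/4)^k}. -/

import Mathlib

open Finset

lemma aux1 (d' : ℕ) (q : ℝ) (h0 : 0 ≤ q) (h1 : q ≤ 1) :
    ∑ j ∈ Finset.Icc ((d' + 1) / 2) d',
      (Nat.choose d' j : ℝ) * q ^ j * (1 - q) ^ (d' - j)
      ≤ 2 ^ d' * q ^ ((d' + 1) / 2) := by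
  have hsum : ∑ j ∈ Finset.Icc ((d'+1)/2) d', (Nat.choose d' j : ℝ) * q ^ j * (1-q) ^ (d'-j)
      ≤ ∑ j ∈ Finset.Icc ((d'+1)/2) d', (Nat.choose d' j : ℝ) * q ^ ((d'+1)/2) := by
    apply Finset.sum_le_sum
    intro j hj
    simp only [Finset.mem_Icc] at hj
    have h2 : (1 - q) ^ (d' - j) ≤ 1 := pow_le_one₀ (by linarith) (by linarith)
    have h3 : q ^ j ≤ q ^ ((d'+1)/2) := pow_le_pow_of_le_one h0 h1 hj.1
    calc (Nat.choose d' j : ℝ) * q ^ j * (1-q)^(d'-j)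
        ≤ (Nat.choose d' j : ℝ) * q ^ j * 1 := by
          apply mul_le_mul_of_nonneg_left h2
          positivity
      _ = (Nat.choose d' j : ℝ) * q ^ j := by ring
      _ ≤ (Nat.choose d' j : ℝ) * q ^ ((d'+1)/2) :=
          mul_le_mul_of_nonneg_left h3 (by positivity)
  refine hsum.trans ?_
  rw [← Finset.sum_mul]
  apply mul_le_mul_of_nonneg_right _ (by positivity)
  have h4 : ∑ j ∈ Finset.Icc ((d'+1)/2) d', (Nat.choose d' j : ℝ)
      ≤ ∑ j ∈ Finset.range (d'+1), (Nat.choose d' j : ℝ) := by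
    apply Finset.sum_le_sum_of_subset_of_nonneg
    · intro x hx
      simp only [Finset.mem_Icc] at hx
      simp [Nat.lt_succ_iff, hx.2]
    · intros; positivity
  refine h4.trans ?_
  rw [← Nat.cast_sum, Nat.sum_range_choose]
  norm_num

lemma aux2 (d' : ℕ) (p a b : ℝ) (hp0 : 0 ≤ p) (hp : p ≤ 1/16)
    (hb : 0 < b) (hab : b + (d' : ℝ)/4 ≤ a) :
    2 ^ d' * p ^ a ≤ p ^ b := by
  have hd4 : (0:ℝ) ≤ (d':ℝ)/4 := by positivity
  rcases eq_or_lt_of_le hp0 with h | h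
  · rw [← h, Real.zero_rpow (by linarith : a ≠ 0),
      Real.zero_rpow (by linarith : b ≠ 0)]
    norm_num
  · have h1 : p ^ a = p ^ b * p ^ (a - b) := by
      rw [← Real.rpow_add h]; ring_nf
    have h2 : p ^ (a-b) ≤ (1/16 : ℝ) ^ (a-b) :=
      Real.rpow_le_rpow hp0 hp (by linarith)
    have h3 : (1/16:ℝ) ^ (a-b) ≤ (1/16:ℝ) ^ ((d':ℝ)/4) :=
      Real.rpow_le_rpow_of_exponent_ge (by norm_num) (by norm_num) (by linarith)
    have hpow : (1/16:ℝ) = (2:ℝ) ^ (-4:ℝ) := by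
      rw [show (-4:ℝ) = ((-4:ℤ):ℝ) by norm_num, Real.rpow_intCast]
      norm_num
    have h4 : (1/16:ℝ) ^ ((d':ℝ)/4) * 2 ^ d' = 1 := by
      calc (1/16:ℝ) ^ ((d':ℝ)/4) * 2 ^ d'
          = ((2:ℝ) ^ (-4:ℝ)) ^ ((d':ℝ)/4) * 2 ^ ((d':ℕ):ℝ) := by
            rw [← hpow, Real.rpow_natCast]
        _ = (2:ℝ) ^ ((-4:ℝ) * ((d':ℝ)/4)) * 2 ^ ((d':ℕ):ℝ) := by
            rw [← Real.rpow_mul (by norm_num)]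
        _ = (2:ℝ) ^ ((-4:ℝ) * ((d':ℝ)/4) + (d':ℝ)) := by
            rw [← Real.rpow_add (by norm_num)]
        _ = (2:ℝ) ^ (0:ℝ) := by congr 1; ring
        _ = 1 := Real.rpow_zero 2
    calc 2^d' * p^a = 2^d' * (p^b * p^(a-b)) := by rw [h1]
      _ ≤ 2^d' * (p^b * ((1/16:ℝ)^((d':ℝ)/4))) := by
          apply mul_le_mul_of_nonneg_left _ (by positivity)
          exact mul_le_mul_of_nonneg_left (h2.trans h3) (Real.rpow_nonneg hp0 b)
      _ = p^b * ((1/16:ℝ)^((d':ℝ)/4) * 2^d') := by ring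
      _ = p^b := by rw [h4, mul_one]

theorem propagation_doubly_exponential_decay (d' : ℕ) (hd' : 8 ≤ d')
    (p : ℝ) (hp0 : 0 ≤ p) (hp : p ≤ 1/16) (P : ℕ → ℝ) (hP0 : P 0 = p)
    (hPrec : ∀ i : ℕ, P (i + 1) =
      ∑ j ∈ Finset.Icc ((d' + 1) / 2) d',
        (Nat.choose d' j : ℝ) * (P i) ^ j * (1 - P i) ^ (d' - j)) :
    ∀ k : ℕ, 1 ≤ k → P k ≤ p ^ (((d' : ℝ) / 4) ^ k) := by
  have hd8 : (8:ℝ) ≤ (d':ℝ) := by exact_mod_cast hd'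
  have hd4 : (2:ℝ) ≤ (d':ℝ)/4 := by linarith
  have hm : (d':ℝ) ≤ 2 * (((d'+1)/2 : ℕ) : ℝ) := by
    have : d' ≤ 2 * ((d'+1)/2) := by omega
    exact_mod_cast this
  have key : ∀ k : ℕ, (0 ≤ P k ∧ P k ≤ 1/16) ∧
      (1 ≤ k → P k ≤ p ^ (((d':ℝ)/4)^k)) := by
    intro k
    induction k with
    | zero => exact ⟨by rw [hP0]; exact ⟨hp0, hp⟩, by omega⟩
    | succ k ih =>
      obtain ⟨⟨h0, h16⟩, hdec⟩ := ih
      have h1 : P k ≤ 1 := by linarith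
      have hnn : 0 ≤ P (k+1) := by
        rw [hPrec k]
        apply Finset.sum_nonneg
        intro j hj
        exact mul_nonneg (mul_nonneg (by positivity) (pow_nonneg h0 _))
          (pow_nonneg (by linarith) _)
      have hbound : P (k+1) ≤ 2^d' * (P k)^((d'+1)/2) := by
        rw [hPrec k]; exact aux1 d' (P k) h0 h1
      have hgoal : P (k+1) ≤ p ^ (((d':ℝ)/4)^(k+1)) := by
        rcases Nat.eq_zero_or_pos k with rfl | hk
        · have h2 : 2^d' * p ^ ((((d'+1)/2 : ℕ)):ℝ) ≤ p ^ (((d':ℝ)/4)^(0+1)) := by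
            apply aux2 d' p _ _ hp0 hp
            · simp only [zero_add, pow_one]; linarith
            · simp only [zero_add, pow_one]; linarith
          calc P (0+1) ≤ 2^d' * (P 0)^((d'+1)/2) := hbound
            _ = 2^d' * p ^ ((((d'+1)/2 : ℕ)):ℝ) := by
                rw [hP0, Real.rpow_natCast]
            _ ≤ _ := h2
        · have hk1 := hdec hk
          set E := ((d':ℝ)/4)^k with hE
          have hE1 : (1:ℝ) ≤ E := one_le_pow₀ (by linarith)
          have hPk : (P k)^((d'+1)/2) ≤ (p ^ E)^((d'+1)/2) :=
            pow_le_pow_left₀ h0 hk1 _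
          have heq : (p ^ E)^((d'+1)/2 : ℕ) = p ^ (E * (((d'+1)/2 : ℕ) : ℝ)) := by
            rw [← Real.rpow_natCast (p ^ E), ← Real.rpow_mul hp0]
          have h2 : 2^d' * p ^ (E * (((d'+1)/2:ℕ):ℝ)) ≤ p ^ (((d':ℝ)/4)^(k+1)) := by
            apply aux2 d' p _ _ hp0 hp
            · exact pow_pos (by linarith) _
            · have hs : ((d':ℝ)/4)^(k+1) = E * ((d':ℝ)/4) := by rw [pow_succ]
              rw [hs]
              have hstep : E * ((d':ℝ)/4) + (d':ℝ)/4 ≤ E * ((d':ℝ)/2) := by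
                nlinarith
              refine hstep.trans ?_
              have hm2 : (d':ℝ)/2 ≤ (((d'+1)/2 : ℕ) : ℝ) := by linarith
              exact mul_le_mul_of_nonneg_left hm2 (by linarith)
          calc P (k+1) ≤ 2^d' * (P k)^((d'+1)/2) := hbound
            _ ≤ 2^d' * (p^E)^((d'+1)/2) := by
                apply mul_le_mul_of_nonneg_left hPk
                positivity
            _ = 2^d' * p ^ (E * (((d'+1)/2:ℕ):ℝ)) := by rw [heq]
            _ ≤ _ := h2
      have h16' : P (k+1) ≤ 1/16 := by
        refine hgoal.trans ?_
        have e1 : p ^ (((d':ℝ)/4)^(k+1)) ≤ (1/16:ℝ) ^ (((d':ℝ)/4)^(k+1)) :=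
          Real.rpow_le_rpow hp0 hp (by positivity)
        have e2 : (1/16:ℝ) ^ (((d':ℝ)/4)^(k+1)) ≤ (1/16:ℝ) ^ (1:ℝ) :=
          Real.rpow_le_rpow_of_exponent_ge (by norm_num) (by norm_num)
            (one_le_pow₀ (by linarith))
        have : ((1:ℝ)/16) ^ (1:ℝ) = 1/16 := Real.rpow_one _
        linarith [e1.trans e2]
      exact ⟨⟨hnn, h16'⟩, fun _ => hgoal⟩
  intro k hk
  exact (key k).2 hk
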